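/- In the random model with B-irreducible probability matrices, the pathwise-defined sequence {ℓ_q} associated with {W(t)} satisfies Σ_{q=1}^∞ 1/n^{ℓ_q} = ∞ almost surely. -/

import Mathlib

open Finset MeasureTheory

/-- `A_{S S̄} = ∑_{i ∈ S, j ∉ S} A i j`. -/
def flowSum {n : ℕ} (A : Matrix (Fin n) (Fin n) ℝ) (S : Finset (Fin n)) : ℝ :=
  ∑ i ∈ S, ∑ j ∈ Sᶜ, A i j

/-- `S` is a nontrivial subset of `[n]`. -/
def NontrivialSubset {n : ℕ} (S : Finset (Fin n)) : Prop :=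
  S.Nonempty ∧ S ≠ Finset.univ

/-- Directed infinite flow property: for every nontrivial `S`, `∑_t A_{S S̄}(t) = ∞`. -/
def DirectedInfiniteFlow {n : ℕ} (A : ℕ → Matrix (Fin n) (Fin n) ℝ) : Prop :=
  ∀ S : Finset (Fin n), NontrivialSubset S →
    Filter.Tendsto (fun T => ∑ t ∈ Finset.range T, flowSum (A t) S)
      Filter.atTop Filter.atTop

/-- The backward product `A(t:s) = A(t) A(t-1) ⋯ A(s)`. -/
def matProd {n : ℕ} (A : ℕ → Matrix (Fin n) (Fin n) ℝ) (t s : ℕ) :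
    Matrix (Fin n) (Fin n) ℝ :=
  (((List.range (t + 1 - s)).map fun k => A (t - k))).prod

/-- Row-stochastic nonnegative matrix. -/
def RowStochastic {n : ℕ} (A : Matrix (Fin n) (Fin n) ℝ) : Prop :=
  (∀ i j, 0 ≤ A i j) ∧ ∀ i, ∑ j, A i j = 1

/-- Column-stochastic nonnegative matrix. -/
def ColStochastic {n : ℕ} (A : Matrix (Fin n) (Fin n) ℝ) : Prop :=
  (∀ i j, 0 ≤ A i j) ∧ ∀ j, ∑ i, A i j = 1

/-- `W` is the degree-normalized adjacency matrix of a digraph with all self-loops: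
`W i j = 1 / (out-degree of j)` if there is an edge from `j` to `i`, else `0`. -/
def OutDegreeForm {n : ℕ} (W : Matrix (Fin n) (Fin n) ℝ) : Prop :=
  ∃ N : Fin n → Finset (Fin n), (∀ j, j ∈ N j) ∧
    ∀ i j, W i j = if i ∈ N j then (1 : ℝ) / (N j).card else 0

/-- Strong aperiodicity of a sequence of matrices. -/
def StronglyAperiodic {n : ℕ} (A : ℕ → Matrix (Fin n) (Fin n) ℝ) : Prop :=
  ∃ γ : ℝ, 0 < γ ∧ ∀ t i, γ ≤ A t i i

/-- The times `k_q`: `k_0 = 0` and `k_q` is the least `t' > k_{q-1}` with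
nonzero flow `∑_{t=k_{q-1}}^{t'-1} A_{S S̄}(t) > 0` across every nontrivial cut. -/
noncomputable def kSeq {n : ℕ} (A : ℕ → Matrix (Fin n) (Fin n) ℝ) : ℕ → ℕ
  | 0 => 0
  | q + 1 => sInf {t' : ℕ | kSeq A q < t' ∧ ∀ S : Finset (Fin n), NontrivialSubset S →
      0 < ∑ t ∈ Finset.Ico (kSeq A q) t', flowSum (A t) S}

/-- `ℓ_q = k_{qn} - k_{(q-1)n}`. -/
noncomputable def ellSeq {n : ℕ} (A : ℕ → Matrix (Fin n) (Fin n) ℝ) (q : ℕ) : ℕ :=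
  kSeq A (q * n) - kSeq A ((q - 1) * n)

/-- The index set `Q_{t,s} = {q ≥ 1 : s ≤ k_{(q-1)n}, k_{qn} ≤ t}` (as a `Finset`). -/
noncomputable def QSet {n : ℕ} (A : ℕ → Matrix (Fin n) (Fin n) ℝ) (t s : ℕ) :
    Finset ℕ :=
  (Finset.Icc 1 t).filter fun q => s ≤ kSeq A ((q - 1) * n) ∧ kSeq A (q * n) ≤ t

/-- `Λ_{t,s} = ∏_{q ∈ Q_{t,s}} (1 - 1/n^{ℓ_q})`. -/
noncomputable def Lam {n : ℕ} (A : ℕ → Matrix (Fin n) (Fin n) ℝ) (t s : ℕ) : ℝ :=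
  ∏ q ∈ QSet A t s, (1 - 1 / (n : ℝ) ^ (ellSeq A q))

/-- Push-sum iterates: `u(0) = u0`, `u(t+1) = W(t) u(t)`. -/
def pushIter {n : ℕ} (W : ℕ → Matrix (Fin n) (Fin n) ℝ) (u0 : Fin n → ℝ) : ℕ → Fin n → ℝ
  | 0 => u0
  | t + 1 => (W t).mulVec (pushIter W u0 t)

/-- A nonnegative matrix is irreducible if the digraph with an edge from `j` to `i`
whenever `A i j > 0` is strongly connected. -/
def IrreducibleMat {n : ℕ} (A : Matrix (Fin n) (Fin n) ℝ) : Prop :=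
  ∀ i j : Fin n, Relation.ReflTransGen (fun a b => 0 < A b a) i j


/-- The random column-stochastic matrix built from the Bernoulli variables `R`:
`W(t)(ω)_{ij} = R_{ij}(t)(ω) / ∑_k R_{kj}(t)(ω)`. -/
noncomputable def Wof {n : ℕ} {Ω : Type*} (R : ℕ → Fin n → Fin n → Ω → ℝ)
    (t : ℕ) (ω : Ω) : Matrix (Fin n) (Fin n) ℝ :=
  fun i j => R t i j ω / ∑ k, R t k j ω

/-! ### Auxiliary lemmas -/

lemma flowSum_nonneg {n : ℕ} {A : Matrix (Fin n) (Fin n) ℝ} (hA : ∀ i j, 0 ≤ A i j)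
    (S : Finset (Fin n)) : 0 ≤ flowSum A S :=
  Finset.sum_nonneg fun i _ => Finset.sum_nonneg fun j _ => hA i j

lemma flowSum_pos {n : ℕ} {A : Matrix (Fin n) (Fin n) ℝ} (hA : ∀ i j, 0 ≤ A i j)
    {S : Finset (Fin n)} {i j : Fin n} (hi : i ∈ S) (hj : j ∉ S) (h : 0 < A i j) :
    0 < flowSum A S := by
  refine Finset.sum_pos' (fun i' _ => Finset.sum_nonneg fun j' _ => hA i' j') ⟨i, hi, ?_⟩
  exact Finset.sum_pos' (fun j' _ => hA i j') ⟨j, Finset.mem_compl.2 hj, h⟩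

lemma cross_aux {n : ℕ} {M : Matrix (Fin n) (Fin n) ℝ} {S : Finset (Fin n)} :
    ∀ {x y : Fin n}, Relation.ReflTransGen (fun a b => 0 < M b a) x y → x ∉ S → y ∈ S →
      ∃ i ∈ S, ∃ j, j ∉ S ∧ 0 < M i j := by
  intro x y h
  induction h with
  | refl => intro hx hy; exact absurd hy hx
  | @tail b c h1 h2 ih =>
    intro hx hy
    by_cases hb : b ∈ S
    · exact ih hx hb
    · exact ⟨c, hy, b, hb, h2⟩

lemma exists_cross {n : ℕ} {M : Matrix (Fin n) (Fin n) ℝ} (hM : IrreducibleMat M)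
    {S : Finset (Fin n)} (hS : NontrivialSubset S) :
    ∃ i ∈ S, ∃ j, j ∉ S ∧ 0 < M i j := by
  obtain ⟨⟨y, hy⟩, hne⟩ := hS
  have hx : ∃ x, x ∉ S := by
    by_contra hc
    push_neg at hc
    exact hne (Finset.eq_univ_iff_forall.2 hc)
  obtain ⟨x, hx⟩ := hx
  exact cross_aux (hM x y) hx hy

lemma le_mul_block {n B m : ℕ} (hn : 0 < n) (hB : 1 ≤ B) : m ≤ 2*n*m*B := by
  calc m = 1*m*1 := by ring
    _ ≤ (2*n)*m*B := Nat.mul_le_mul (Nat.mul_le_mul (by omega) le_rfl) hB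
    _ = 2*n*m*B := by ring

/-- If infinitely many terms of a nonnegative sequence exceed `δ > 0`, the partial sums
over `Icc 1 Q` diverge. -/
lemma tendsto_sum_of_infinite {f : ℕ → ℝ} (hf : ∀ q, 0 ≤ f q) {δ : ℝ} (hδ : 0 < δ)
    (hinf : {q | 1 ≤ q ∧ δ ≤ f q}.Infinite) :
    Filter.Tendsto (fun Q => ∑ q ∈ Finset.Icc 1 Q, f q) Filter.atTop Filter.atTop := by
  apply Filter.tendsto_atTop_atTop_of_monotone
  · intro a b hab
    exact Finset.sum_le_sum_of_subset_of_nonneg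
      (Finset.Icc_subset_Icc le_rfl hab) (fun q _ _ => hf q)
  · intro C
    obtain ⟨N, hN⟩ := exists_nat_ge (C / δ)
    obtain ⟨T, hTsub, hTcard⟩ := hinf.exists_subset_card_eq N
    refine ⟨T.sup id, ?_⟩
    have hsub : T ⊆ Finset.Icc 1 (T.sup id) := by
      intro q hq
      exact Finset.mem_Icc.2 ⟨(hTsub hq).1, Finset.le_sup (f := id) hq⟩
    calc C ≤ N * δ := by
          rw [div_le_iff₀ hδ] at hN; linarith
      _ = T.card • δ := by rw [hTcard]; simp [nsmul_eq_mul]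
      _ ≤ ∑ q ∈ T, f q := Finset.card_nsmul_le_sum T f δ fun q hq => (hTsub hq).2
      _ ≤ ∑ q ∈ Finset.Icc 1 (T.sup id), f q :=
          Finset.sum_le_sum_of_subset_of_nonneg hsub (fun q _ _ => hf q)

/-- The main deterministic lemma: if infinitely many super-blocks (of `2n` consecutive
`B`-blocks) are "good" (positive flow across each cut within each `B`-block), then
`∑_q 1/n^{ℓ_q}` diverges. -/
lemma det_main {n B : ℕ} (hn : 2 ≤ n) (hB : 1 ≤ B)
    (A : ℕ → Matrix (Fin n) (Fin n) ℝ) (hA : ∀ t i j, 0 ≤ A t i j)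
    (hGood : {m : ℕ | ∀ c, 2*n*m ≤ c → c < 2*n*(m+1) →
        ∀ S : Finset (Fin n), NontrivialSubset S →
          ∃ t, c*B ≤ t ∧ t < (c+1)*B ∧ 0 < flowSum (A t) S}.Infinite) :
    Filter.Tendsto (fun Q => ∑ q ∈ Finset.Icc 1 Q, 1 / (n:ℝ) ^ (ellSeq A q))
      Filter.atTop Filter.atTop := by
  have hn0 : 0 < n := by omega
  have hn1 : (1:ℝ) ≤ (n:ℝ) := by exact_mod_cast Nat.one_le_of_lt hn
  -- the per-step sets defining `kSeq` are nonempty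
  have hstep : ∀ a : ℕ, {t' : ℕ | a < t' ∧ ∀ S : Finset (Fin n), NontrivialSubset S →
      0 < ∑ t ∈ Finset.Ico a t', flowSum (A t) S}.Nonempty := by
    intro a
    obtain ⟨m, hmG, hma⟩ := hGood.exists_gt a
    have hma' : a ≤ 2*n*m*B := le_trans (le_of_lt hma) (le_mul_block hn0 hB)
    refine ⟨2*n*m*B + B, by omega, ?_⟩
    intro S hS
    have he0 : 2*n*(m+1) = 2*n*m + 2*n := by ring
    obtain ⟨t, ht1, ht2, ht3⟩ := hmG (2*n*m) le_rfl (by omega) S hS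
    have htmem : t ∈ Finset.Ico a (2*n*m*B + B) := by
      refine Finset.mem_Ico.2 ⟨le_trans hma' ht1, ?_⟩
      have : (2*n*m+1)*B = 2*n*m*B + B := by ring
      omega
    exact Finset.sum_pos' (fun t' _ => flowSum_nonneg (hA t') S) ⟨t, htmem, ht3⟩
  have hmem : ∀ q, kSeq A (q+1) ∈ {t' : ℕ | kSeq A q < t' ∧
      ∀ S : Finset (Fin n), NontrivialSubset S →
        0 < ∑ t ∈ Finset.Ico (kSeq A q) t', flowSum (A t) S} := by
    intro q
    exact Nat.sInf_mem (hstep (kSeq A q))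
  have hkmono : StrictMono (kSeq A) := strictMono_nat_of_lt_succ fun q => (hmem q).1
  have hkge : ∀ q, q ≤ kSeq A q := fun q => hkmono.le_apply
  -- each good super-block produces an index q with small ℓ_q
  have hclm : ∀ m ∈ {m : ℕ | ∀ c, 2*n*m ≤ c → c < 2*n*(m+1) →
        ∀ S : Finset (Fin n), NontrivialSubset S →
          ∃ t, c*B ≤ t ∧ t < (c+1)*B ∧ 0 < flowSum (A t) S},
      ∃ q, 1 ≤ q ∧ ellSeq A q ≤ 2*n*B ∧ 2*n*m*B < kSeq A ((q-1)*n) ∧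
        kSeq A (q*n) ≤ 2*n*m*B + 2*n*B := by
    intro m hmG
    set s := 2*n*m*B with hs
    obtain ⟨r, hr0, hr1⟩ : ∃ r, kSeq A r ≤ s ∧ s < kSeq A (r+1) := by
      refine ⟨Nat.findGreatest (fun r => kSeq A r ≤ s) s, ?_, ?_⟩
      · exact Nat.findGreatest_spec (P := fun r => kSeq A r ≤ s) (m := 0)
          (Nat.zero_le s) (Nat.zero_le s)
      · by_cases hc : Nat.findGreatest (fun r => kSeq A r ≤ s) s + 1 ≤ s
        · have h := Nat.findGreatest_is_greatest (P := fun r => kSeq A r ≤ s)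
            (Nat.lt_succ_self _) hc
          exact lt_of_not_ge h
        · push_neg at hc
          have h1 := hkge (Nat.findGreatest (fun r => kSeq A r ≤ s) s + 1)
          omega
    have he00 : 2*n*(m+1) = 2*n*m + 2*n := by ring
    have hjb : ∀ j, j ≤ 2*n → kSeq A (r + j) ≤ s + j*B := by
      intro j
      induction j with
      | zero => intro _; simpa using hr0
      | succ j ih =>
        intro hj
        have ihj : kSeq A (r + j) ≤ s + j*B := ih (by omega)
        have heB : (j+1)*B = j*B + B := by ring
        have hle : kSeq A (r + j + 1) ≤ s + (j+1)*B := by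
          apply Nat.sInf_le
          refine ⟨by omega, ?_⟩
          intro S hS
          obtain ⟨t, ht1, ht2, ht3⟩ := hmG (2*n*m + j) (by omega) (by omega) S hS
          have he1 : (2*n*m + j)*B = s + j*B := by rw [hs]; ring
          have he2 : (2*n*m + j + 1)*B = s + (j+1)*B := by rw [hs]; ring
          rw [he1] at ht1
          rw [he2] at ht2
          have htmem : t ∈ Finset.Ico (kSeq A (r + j)) (s + (j+1)*B) :=
            Finset.mem_Ico.2 ⟨by omega, ht2⟩
          exact Finset.sum_pos' (fun t' _ => flowSum_nonneg (hA t') S) ⟨t, htmem, ht3⟩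
        have he3 : r + (j + 1) = r + j + 1 := by omega
        rw [he3]
        exact hle
    have h1 := Nat.div_add_mod r n
    have h2 := Nat.mod_lt r hn0
    have hd2 : (r/n) * n ≤ r := Nat.div_mul_le_self r n
    have e1 : (r/n + 1) * n = (r/n)*n + n := by ring
    have e2 : (r/n + 2) * n = (r/n)*n + 2*n := by ring
    have e3 : n * (r/n) = (r/n) * n := by ring
    have hq1 : r + 1 ≤ (r/n + 1) * n := by omega
    have hq2 : (r/n + 2) * n ≤ r + 2*n := by omega
    have hkub : kSeq A (r + 2*n) ≤ s + 2*n*B := by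
      have h4 := hjb (2*n) le_rfl
      have he : (2*n)*B = 2*n*B := by ring
      omega
    have hk1 : s < kSeq A ((r/n + 1) * n) := lt_of_lt_of_le hr1 (hkmono.monotone hq1)
    have hk2 : kSeq A ((r/n + 2) * n) ≤ s + 2*n*B := le_trans (hkmono.monotone hq2) hkub
    have hsub : (r/n + 2 - 1) = r/n + 1 := by generalize r / n = d; omega
    refine ⟨r/n + 2, by omega, ?_, ?_, ?_⟩
    · unfold ellSeq
      rw [hsub]
      have hkle : kSeq A ((r/n + 1) * n) ≤ kSeq A ((r/n + 2) * n) :=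
        hkmono.monotone (by omega)
      omega
    · rw [hsub]; exact hk1
    · exact hk2
  -- conclude: infinitely many q with ℓ_q ≤ 2nB
  have hTinf : {q : ℕ | 1 ≤ q ∧ ellSeq A q ≤ 2*n*B}.Infinite := by
    by_contra hfin
    rw [Set.not_infinite] at hfin
    obtain ⟨N, hNb⟩ := hfin.bddAbove
    -- find q in the set larger than N
    obtain ⟨m, hmG, hml⟩ := hGood.exists_gt (kSeq A (N * n))
    obtain ⟨q, hq1, hq2, hq3, _⟩ := hclm m hmG
    have hmon : kSeq A (N*n) < kSeq A ((q-1)*n) := by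
      have : kSeq A (N*n) ≤ 2*n*m*B := le_trans (le_of_lt hml) (le_mul_block hn0 hB)
      omega
    have hNq : N*n < (q-1)*n := by
      by_contra hc
      push_neg at hc
      exact absurd (hkmono.monotone hc) (by omega)
    have hNlt : N < q := by
      rcases Nat.lt_or_ge N q with h | h
      · exact h
      · exfalso
        have : (q-1)*n ≤ N*n := Nat.mul_le_mul_right n (by omega)
        omega
    exact absurd (hNb ⟨hq1, hq2⟩) (by omega)
  -- now apply the divergence lemma
  apply tendsto_sum_of_infinite (δ := 1 / (n:ℝ) ^ (2*n*B))
  · intro q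
    positivity
  · positivity
  · refine hTinf.mono ?_
    rintro q ⟨hq1, hq2⟩
    refine ⟨hq1, ?_⟩
    apply one_div_le_one_div_of_le
    · positivity
    · exact pow_le_pow_right₀ hn1 hq2

/-- In the random model, the pathwise sequence `{ℓ_q}` satisfies
`∑_q 1/n^{ℓ_q} = ∞` almost surely. -/
theorem random_model_ell_sum_infinite
    {Ω : Type*} [MeasurableSpace Ω] (μ : MeasureTheory.Measure Ω)
    [MeasureTheory.IsProbabilityMeasure μ]
    {n : ℕ} (hn : 2 ≤ n) (ε : ℝ) (hε : 0 < ε) (B : ℕ) (hB : 1 ≤ B)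
    (P : ℕ → Matrix (Fin n) (Fin n) ℝ)
    (hP01 : ∀ t i j, P t i j ∈ Set.Icc (0:ℝ) 1)
    (hPdiag : ∀ t i, P t i i = 1)
    (hPeps : ∀ t i j, P t i j ≠ 0 → ε ≤ P t i j)
    (hPirr : ∀ t : ℕ, IrreducibleMat (∑ t' ∈ Finset.Ico (t * B) ((t + 1) * B), P t'))
    (R : ℕ → Fin n → Fin n → Ω → ℝ)
    (hRmeas : ∀ t i j, Measurable (R t i j))
    (hR01 : ∀ t i j ω, R t i j ω = 0 ∨ R t i j ω = 1)
    (hRP : ∀ t i j, μ {ω | R t i j ω = 1} = ENNReal.ofReal (P t i j))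
    (hindep : ProbabilityTheory.iIndepFun
      (m := fun _ : ℕ × Fin n × Fin n => Real.measurableSpace)
      (fun p ω => R p.1 p.2.1 p.2.2 ω) μ)
    :
    ∀ᵐ ω ∂μ, Filter.Tendsto
      (fun Q => ∑ q ∈ Finset.Icc 1 Q, 1 / (n : ℝ) ^ (ellSeq (fun t => Wof R t ω) q))
      Filter.atTop Filter.atTop := by
  classical
  have hn0 : 0 < n := by omega
  have hε1 : ε ≤ 1 := by
    have hne : P 0 ⟨0, hn0⟩ ⟨0, hn0⟩ ≠ 0 := by rw [hPdiag]; norm_num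
    have h := hPeps 0 ⟨0, hn0⟩ ⟨0, hn0⟩ hne
    have h2 := (hP01 0 ⟨0, hn0⟩ ⟨0, hn0⟩).2
    linarith
  -- blocks of (t, i, j) coordinates
  set T : ℕ → Finset (ℕ × Fin n × Fin n) := fun m =>
    ((Finset.Ico (2*n*m*B) (2*n*(m+1)*B)) ×ˢ (Finset.univ : Finset (Fin n × Fin n))).filter
      (fun p => P p.1 p.2.1 p.2.2 ≠ 0) with hT
  set Aset : ℕ × Fin n × Fin n → Set Ω := fun p => {ω | R p.1 p.2.1 p.2.2 ω = 1} with hAset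
  set E : ℕ → Set Ω := fun m => ⋂ p ∈ T m, Aset p with hE
  have hmeasA : ∀ p, MeasurableSet (Aset p) := fun p =>
    (hRmeas p.1 p.2.1 p.2.2) (measurableSet_singleton 1)
  have hEmeas : ∀ m, MeasurableSet (E m) := fun m =>
    Set.Finite.measurableSet_biInter (Finset.finite_toSet (T m)) fun p _ => hmeasA p
  have hcomap : ∀ p, MeasurableSet[MeasurableSpace.comap
      (fun ω => R p.1 p.2.1 p.2.2 ω) Real.measurableSpace] (Aset p) := by
    intro p
    exact ⟨{1}, measurableSet_singleton 1, by ext ω; simp [hAset]⟩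
  have hiIndep := hindep.iIndep
  have hTdisj : ∀ {m1 m2 : ℕ}, m1 ≠ m2 → Disjoint (T m1) (T m2) := by
    intro m1 m2 hne
    rw [Finset.disjoint_left]
    intro p hp1 hp2
    simp only [hT, Finset.mem_filter, Finset.mem_product, Finset.mem_Ico] at hp1 hp2
    rcases Nat.lt_or_ge m1 m2 with h | h
    · have : 2*n*(m1+1)*B ≤ 2*n*m2*B := by
        have : 2*n*(m1+1) ≤ 2*n*m2 := by nlinarith
        exact Nat.mul_le_mul_right B this
      omega
    · have hlt : m2 < m1 := by omega
      have : 2*n*(m2+1)*B ≤ 2*n*m1*B := by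
        have : 2*n*(m2+1) ≤ 2*n*m1 := by nlinarith
        exact Nat.mul_le_mul_right B this
      omega
  have hEprod : ∀ m, μ (E m) = ∏ p ∈ T m, μ (Aset p) := fun m =>
    hiIndep.meas_biInter (fun p _ => hcomap p)
  have hEindep : ProbabilityTheory.iIndepSet E μ := by
    rw [ProbabilityTheory.iIndepSet_iff_meas_biInter hEmeas]
    intro s
    have h1 : (⋂ m ∈ s, E m) = ⋂ p ∈ s.biUnion T, Aset p := by
      rw [Finset.set_biInter_biUnion]
    rw [h1, hiIndep.meas_biInter (fun p _ => hcomap p),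
      Finset.prod_biUnion (fun m1 _ m2 _ hne => hTdisj hne)]
    exact Finset.prod_congr rfl fun m _ => (hEprod m).symm
  -- lower bound on μ (E m)
  set δ : ENNReal := (ENNReal.ofReal ε) ^ (2*n*B*(n*n)) with hδ
  have hδ0 : δ ≠ 0 := by
    apply pow_ne_zero
    simp [ENNReal.ofReal_eq_zero, not_le, hε]
  have hμE : ∀ m, δ ≤ μ (E m) := by
    intro m
    rw [hEprod m]
    have hcard : (T m).card ≤ 2*n*B*(n*n) := by
      calc (T m).card ≤ ((Finset.Ico (2*n*m*B) (2*n*(m+1)*B)) ×ˢ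
            (Finset.univ : Finset (Fin n × Fin n))).card := Finset.card_filter_le _ _
        _ = (2*n*(m+1)*B - 2*n*m*B) * (n*n) := by
            rw [Finset.card_product, Nat.card_Ico]
            simp [Finset.card_univ]
        _ ≤ 2*n*B*(n*n) := by
            have : 2*n*(m+1)*B - 2*n*m*B ≤ 2*n*B := by
              have : 2*n*(m+1)*B = 2*n*m*B + 2*n*B := by ring
              omega
            exact Nat.mul_le_mul_right _ this
    have hofε1 : ENNReal.ofReal ε ≤ 1 := by
      rw [← ENNReal.ofReal_one]
      exact ENNReal.ofReal_le_ofReal hε1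
    calc δ ≤ (ENNReal.ofReal ε) ^ (T m).card :=
          pow_le_pow_right_of_le_one' hofε1 hcard
      _ = ∏ _p ∈ T m, ENNReal.ofReal ε := by rw [Finset.prod_const]
      _ ≤ ∏ p ∈ T m, μ (Aset p) := by
          apply Finset.prod_le_prod'
          intro p hp
          simp only [hT, Finset.mem_filter] at hp
          have h1 : μ (Aset p) = ENNReal.ofReal (P p.1 p.2.1 p.2.2) := hRP p.1 p.2.1 p.2.2
          rw [h1]
          exact ENNReal.ofReal_le_ofReal (hPeps _ _ _ hp.2)
  have hsum : (∑' m, μ (E m)) = ⊤ := by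
    rw [← top_le_iff]
    calc (⊤ : ENNReal) = ∑' _m : ℕ, δ := (ENNReal.tsum_const_eq_top_of_ne_zero hδ0).symm
      _ ≤ ∑' m, μ (E m) := ENNReal.tsum_le_tsum hμE
  have hlimsup : μ (Filter.limsup E Filter.atTop) = 1 :=
    ProbabilityTheory.measure_limsup_eq_one hEmeas hEindep hsum
  have hae : ∀ᵐ ω ∂μ, ω ∈ Filter.limsup E Filter.atTop := by
    rw [MeasureTheory.ae_iff]
    have hms : MeasurableSet (Filter.limsup E Filter.atTop) :=
      MeasurableSet.measurableSet_limsup hEmeas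
    have : {ω | ¬ ω ∈ Filter.limsup E Filter.atTop} = (Filter.limsup E Filter.atTop)ᶜ := rfl
    rw [this, measure_compl hms (measure_ne_top μ _), hlimsup, measure_univ]
    simp
  filter_upwards [hae] with ω hω
  -- pathwise argument
  set W : ℕ → Matrix (Fin n) (Fin n) ℝ := fun t => Wof R t ω with hW
  have hWnn : ∀ t i j, 0 ≤ W t i j := by
    intro t i j
    apply div_nonneg
    · rcases hR01 t i j ω with h | h <;> rw [h] <;> norm_num
    · apply Finset.sum_nonneg
      intro k _
      rcases hR01 t k j ω with h | h <;> rw [h] <;> norm_num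
  apply det_main hn hB W hWnn
  have hωinf : {m | ω ∈ E m}.Infinite := by
    rw [← Nat.frequently_atTop_iff_infinite]
    exact Filter.mem_limsup_iff_frequently_mem.1 hω
  refine hωinf.mono ?_
  intro m hm
  intro c hc1 hc2 S hS
  -- use irreducibility on block c
  obtain ⟨i, hi, j, hj, hij⟩ := exists_cross (hPirr c) hS
  rw [Matrix.sum_apply] at hij
  have hPnn : ∀ t' ∈ Finset.Ico (c*B) ((c+1)*B), (0:ℝ) ≤ P t' i j := fun t' _ =>
    (hP01 t' i j).1
  obtain ⟨t', ht'mem, ht'pos⟩ : ∃ t' ∈ Finset.Ico (c*B) ((c+1)*B), 0 < P t' i j := by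
    by_contra hc
    push_neg at hc
    have : ∑ t' ∈ Finset.Ico (c*B) ((c+1)*B), P t' i j ≤ 0 :=
      Finset.sum_nonpos fun t' ht' => hc t' ht'
    linarith
  rw [Finset.mem_Ico] at ht'mem
  -- t' lies in super-block m, so the edge is realized
  have hmemT : ((t', (i, j)) : ℕ × Fin n × Fin n) ∈ T m := by
    simp only [hT, Finset.mem_filter, Finset.mem_product, Finset.mem_Ico, Finset.mem_univ,
      and_true]
    refine ⟨⟨?_, ?_⟩, ne_of_gt ht'pos⟩
    · have : 2*n*m*B ≤ c*B := Nat.mul_le_mul_right B hc1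
      omega
    · have : (c+1)*B ≤ 2*n*(m+1)*B := Nat.mul_le_mul_right B (by omega)
      omega
  have hR1 : R t' i j ω = 1 := by
    have hmem : ω ∈ E m := hm
    simp only [hE, Set.mem_iInter] at hmem
    exact hmem _ hmemT
  refine ⟨t', ht'mem.1, ht'mem.2, ?_⟩
  have hD1 : (1:ℝ) ≤ ∑ k, R t' k j ω := by
    have hs := Finset.single_le_sum (f := fun k => R t' k j ω)
      (fun k _ => by rcases hR01 t' k j ω with h | h <;> simp [h])
      (Finset.mem_univ i)
    calc (1:ℝ) = R t' i j ω := hR1.symm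
      _ ≤ ∑ k, R t' k j ω := hs
  have hWpos : 0 < W t' i j := by
    have : W t' i j = R t' i j ω / ∑ k, R t' k j ω := rfl
    rw [this, hR1]
    exact div_pos one_pos (lt_of_lt_of_le one_pos hD1)
  exact flowSum_pos (hWnn t') hi hj hWpos
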